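/- Let q > 0 and let a, b be real numbers. For each k > 0 define φ_k : ℝ → ℝ by φ_k(x) := (e^b + kq)·ln(e^x + kq). Then lim_{k→∞} D_{φ_k}(a, b) = e^a − e^b − e^b·(a − b), i.e., the Bregman divergences associated to φ_k converge pointwise to the Bregman divergence associated to the exponential function. -/

import Mathlib

open Real Filter Topology

/-- Bregman divergence associated to a differentiable convex function `φ`. -/
noncomputable def breg (φ : ℝ → ℝ) (a b : ℝ) : ℝ :=
  φ a - φ b - deriv φ b * (a - b)

theorem stmt_16 (q : ℝ) (hq : 0 < q) (a b : ℝ) :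
    Tendsto (fun k : ℝ =>
        breg (fun x => (Real.exp b + k * q) * Real.log (Real.exp x + k * q)) a b)
      atTop (𝓝 (Real.exp a - Real.exp b - Real.exp b * (a - b))) := by
  have key : Tendsto (fun t : ℝ => t * Real.log (1 + (Real.exp a - Real.exp b) / t))
      atTop (𝓝 (Real.exp a - Real.exp b)) :=
    Real.tendsto_mul_log_one_add_div_atTop _
  have htend : Tendsto (fun k : ℝ => Real.exp b + k * q) atTop atTop :=
    tendsto_atTop_add_const_left _ _ (Tendsto.atTop_mul_const hq tendsto_id)
  have main : Tendsto (fun k : ℝ =>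
      (Real.exp b + k * q) * Real.log (1 + (Real.exp a - Real.exp b) / (Real.exp b + k * q)))
      atTop (𝓝 (Real.exp a - Real.exp b)) := key.comp htend
  have final := main.sub_const (Real.exp b * (a - b))
  apply final.congr'
  filter_upwards [eventually_gt_atTop 0] with k hk
  have hkq : 0 < k * q := mul_pos hk hq
  have hb : 0 < Real.exp b + k * q := by positivity
  have ha : 0 < Real.exp a + k * q := by positivity
  have hlog : Real.log (1 + (Real.exp a - Real.exp b) / (Real.exp b + k * q))
      = Real.log (Real.exp a + k * q) - Real.log (Real.exp b + k * q) := by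
    rw [show (1 : ℝ) + (Real.exp a - Real.exp b) / (Real.exp b + k * q)
        = (Real.exp a + k * q) / (Real.exp b + k * q) by field_simp; ring,
      Real.log_div ha.ne' hb.ne']
  have hderiv : deriv (fun x => (Real.exp b + k * q) * Real.log (Real.exp x + k * q)) b
      = Real.exp b := by
    have h1 : HasDerivAt (fun x => Real.exp x + k * q) (Real.exp b) b :=
      (Real.hasDerivAt_exp b).add_const _
    have h2 : HasDerivAt (fun x => (Real.exp b + k * q) * Real.log (Real.exp x + k * q))
        ((Real.exp b + k * q) * (Real.exp b / (Real.exp b + k * q))) b :=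
      (h1.log hb.ne').const_mul _
    rw [h2.deriv]
    field_simp
  simp only [breg, hderiv, hlog]
  ring
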